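/- Let u_1,…,u_n ∈ ℝ^d with n ≥ 2 and let W be a random vector distributed according to the empirical measure n^{−1}Σ_{i=1}^n δ_{u_i}. Then for all t ∈ ℝ^d: 1 − |E[e^{i t'W}]| ≥ (1/(π² n(n−1))) Σ_{i≠j} ξ(u_i,u_j;t), where ξ(u,v;t) = inf_{q∈ℤ}(t'(u−v)−2πq)² and the sum runs over all ordered pairs (i,j) with i ≠ j. -/

import Mathlib

open MeasureTheory ProbabilityTheory Real
open scoped BigOperators ENNReal NNReal

noncomputable section

/-- Euclidean space ℝ^d. -/
abbrev Ed (d : ℕ) := EuclideanSpace ℝ (Fin d)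

variable {d : ℕ}

/-- The characteristic function of a (Borel) measure on ℝ^d. -/
def charFn (μ : Measure (Ed d)) (t : Ed d) : ℂ :=
  ∫ x, Complex.exp (((inner ℝ t x : ℝ) : ℂ) * Complex.I) ∂μ

/-- Partial derivative in the k-th coordinate direction. -/
def partialD {F : Type*} [NormedAddCommGroup F] [NormedSpace ℝ F]
    (k : Fin d) (f : Ed d → F) : Ed d → F :=
  fun x => fderiv ℝ f x (EuclideanSpace.single k 1)

/-- Iterated partial derivative `D^ν` for a multi-index ν. -/
def mDeriv {F : Type*} [NormedAddCommGroup F] [NormedSpace ℝ F]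
    (ν : Fin d → ℕ) (f : Ed d → F) : Ed d → F :=
  (List.finRange d).foldr (fun k g => (partialD k)^[ν k] g) f

/-- The ν-th cumulant of a measure μ on ℝ^d:
`κ_ν = (−i)^{|ν|} D^ν (log φ_μ)(0)` where φ_μ is the characteristic function. -/
def cumulant (μ : Measure (Ed d)) (ν : Fin d → ℕ) : ℂ :=
  (-Complex.I) ^ (∑ k, ν k) * mDeriv ν (fun t => Complex.log (charFn μ t)) 0

/-- The finite set of multi-indices ν ∈ ℤ₊^d with |ν| = j. -/
def multiIdx (d j : ℕ) : Finset (Fin d → ℕ) :=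
  (Fintype.piFinset fun _ : Fin d => Finset.range (j + 1)).filter fun ν => ∑ k, ν k = j

/-- The differential operator `χ̄_j(−D)` applied to f, where
`χ̄_j(z) = j! Σ_{|ν|=j} (χ_ν/ν!) z^ν`. -/
def chiOpApply (χ : (Fin d → ℕ) → ℂ) (j : ℕ) (f : Ed d → ℂ) : Ed d → ℂ :=
  fun x => (j.factorial : ℂ) * (-1 : ℂ) ^ j *
    ∑ ν ∈ multiIdx d j, (χ ν / ∏ k, ((ν k).factorial : ℂ)) * mDeriv ν f x

/-- The Edgeworth polynomial operator `P̃_j(−D; {χ_ν})` applied to f: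
`P̃_j = Σ_{m=1}^{j} (1/m!) Σ*_{j_1+⋯+j_m=j} ∏_k χ̄_{j_k+2}(−D)/(j_k+2)!`,
encoded as a sum over compositions of j. -/
def edgeworthOp (χ : (Fin d → ℕ) → ℂ) (j : ℕ) (f : Ed d → ℂ) : Ed d → ℂ :=
  fun x => ∑ c : Composition j, ((c.length.factorial : ℂ))⁻¹ *
    (c.blocks.foldr
      (fun jk g => fun y => (((jk + 2).factorial : ℂ))⁻¹ * chiOpApply χ (jk + 2) g y) f) x

/-- The standard normal density on ℝ^d. -/
def gaussDensity (d : ℕ) (x : Ed d) : ℝ :=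
  (2 * π) ^ (-(d : ℝ) / 2) * Real.exp (-‖x‖ ^ 2 / 2)

/-- The density of the order-s Edgeworth signed measure
`Σ_{j=0}^{s−2} n^{−j/2} P̃_j(−D;{χ_ν}) φ(x)`. -/
def edgeworthDensity (χ : (Fin d → ℕ) → ℂ) (n s : ℕ) (x : Ed d) : ℝ :=
  (∑ j ∈ Finset.range (s - 1), (((n : ℝ) ^ (-(j : ℝ) / 2) : ℝ) : ℂ) *
    edgeworthOp χ j (fun y => ((gaussDensity d y : ℝ) : ℂ)) x).re

/-- The order-s Edgeworth signed measure, as a set function `A ↦ ∫_A (density)`. -/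
def edgeworthSM (χ : (Fin d → ℕ) → ℂ) (n s : ℕ) (A : Set (Ed d)) : ℝ :=
  ∫ x in A, edgeworthDensity χ n s x

/-- The standard normal distribution Φ = N(0, I_d) on ℝ^d. -/
def stdGaussian (d : ℕ) : Measure (Ed d) :=
  volume.withDensity fun x => ENNReal.ofReal (gaussDensity d x)

/-- Modulus of continuity `ω_f(x;ε) = sup {|f z − f y| : z,y ∈ B(x;ε)}`. -/
def oscil (f : Ed d → ℝ) (x : Ed d) (ε : ℝ) : ℝ :=
  sSup {r | ∃ z ∈ Metric.ball x ε, ∃ y ∈ Metric.ball x ε, r = |f z - f y|}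

/-- Averaged modulus of continuity `ω̄_f(ε;μ) = ∫ ω_f(x;ε) dμ(x)`. -/
def oscilBar (f : Ed d → ℝ) (ε : ℝ) (μ : Measure (Ed d)) : ℝ :=
  ∫ x, oscil f x ε ∂μ

/-- `M_s(f) = sup_x |f(x)|/(1+‖x‖^s)`. -/
def Msup (s : ℕ) (f : Ed d → ℝ) : ℝ := ⨆ x : Ed d, |f x| / (1 + ‖x‖ ^ s)

/-- The (uncentered) second-moment matrix `E[X X']` of a measure on ℝ^d. -/
def covMat (μ : Measure (Ed d)) : Matrix (Fin d) (Fin d) ℝ :=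
  Matrix.of fun k l => ∫ x, x k * x l ∂μ

open Classical in
/-- Inverse square root of a matrix (junk value if not positive semidefinite). -/
def matInvSqrt (M : Matrix (Fin d) (Fin d) ℝ) : Matrix (Fin d) (Fin d) ℝ :=
  if h : M.PosSemidef then ((h.1.eigenvectorUnitary : Matrix (Fin d) (Fin d) ℝ) *
    Matrix.diagonal (Real.sqrt ∘ h.1.eigenvalues) *
    (star h.1.eigenvectorUnitary : Matrix (Fin d) (Fin d) ℝ))⁻¹ else 1

open Classical in
/-- Square root of a matrix (junk value if not positive semidefinite). -/
def matSqrt (M : Matrix (Fin d) (Fin d) ℝ) : Matrix (Fin d) (Fin d) ℝ :=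
  if h : M.PosSemidef then (h.1.eigenvectorUnitary : Matrix (Fin d) (Fin d) ℝ) *
    Matrix.diagonal (Real.sqrt ∘ h.1.eigenvalues) *
    (star h.1.eigenvectorUnitary : Matrix (Fin d) (Fin d) ℝ) else 1

/-- Matrix-vector multiplication on Euclidean space. -/
def mulVecE (M : Matrix (Fin d) (Fin d) ℝ) (x : Ed d) : Ed d :=
  (EuclideanSpace.equiv (Fin d) ℝ).symm (M.mulVec (EuclideanSpace.equiv (Fin d) ℝ x))

/-- Marginal distribution of the i-th coordinate. -/
def marginal {n : ℕ} (P : Measure (Fin n → Ed d)) (i : Fin n) : Measure (Ed d) :=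
  P.map fun ω => ω i

/-- `V_{n,P} = (1/n) Σ_i Var_P(X_{i,n})` (for mean-zero coordinates). -/
def Vmat {d : ℕ} (n : ℕ) (P : Measure (Fin n → Ed d)) : Matrix (Fin d) (Fin d) ℝ :=
  (n : ℝ)⁻¹ • ∑ i : Fin n, covMat (marginal P i)

/-- `Q_{n,P}`, the distribution of `n^{−1/2} Σ_i V_{n,P}^{−1/2} X_{i,n}`. -/
def Qmeas {d : ℕ} (n : ℕ) (P : Measure (Fin n → Ed d)) : Measure (Ed d) :=
  P.map fun ω => (Real.sqrt n)⁻¹ • ∑ i, mulVecE (matInvSqrt (Vmat n P)) (ω i)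

/-- `χ̄_{ν,P}`, the average over i of the ν-th cumulant of `V_{n,P}^{−1/2} X_{i,n}`. -/
def chiBar {d : ℕ} (n : ℕ) (P : Measure (Fin n → Ed d)) (ν : Fin d → ℕ) : ℂ :=
  (n : ℂ)⁻¹ * ∑ i : Fin n, cumulant ((marginal P i).map (mulVecE (matInvSqrt (Vmat n P)))) ν

/-- `ρ_{n,s,P} = (1/n) Σ_i E_P ‖X_{i,n}‖^s`. -/
def rhoM {d : ℕ} (n s : ℕ) (P : Measure (Fin n → Ed d)) : ℝ :=
  (n : ℝ)⁻¹ * ∑ i : Fin n, ∫ ω, ‖ω i‖ ^ s ∂P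

/-- The mean weak Cramér condition with parameter (b,c,R) for a collection of
joint distributions of (X_{i,n})_{i=1}^n. -/
def meanWeakCramer {d : ℕ} {n : ℕ} (Ps : Set (Measure (Fin n → Ed d))) (b c R : ℝ) : Prop :=
  ∀ P ∈ Ps, ∀ t : Ed d, R < ‖t‖ →
    (n : ℝ)⁻¹ * ∑ i : Fin n, ‖charFn (marginal P i) t‖ ≤ 1 - c / ‖t‖ ^ b

/-- The weak Cramér condition with parameter (b,c,R) for a single distribution. -/
def weakCramerMeas (μ : Measure (Ed d)) (b c R : ℝ) : Prop :=
  ∀ t : Ed d, R < ‖t‖ → ‖charFn μ t‖ ≤ 1 - c / ‖t‖ ^ b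

/-- The empirical (resampling) measure `(1/n) Σ_j δ_{x_j}`. -/
def empMeas {d n : ℕ} (x : Fin n → Ed d) : Measure (Ed d) :=
  ((n : ℝ≥0∞))⁻¹ • ∑ i : Fin n, Measure.dirac (x i)

/-- Sample mean. -/
def sMean {d n : ℕ} (x : Fin n → Ed d) : Ed d := (n : ℝ)⁻¹ • ∑ i, x i

/-- Sample covariance matrix `V̂_n`. -/
def Vhat {d n : ℕ} (x : Fin n → Ed d) : Matrix (Fin d) (Fin d) ℝ :=
  (n : ℝ)⁻¹ • ∑ i : Fin n, Matrix.of fun k l => (x i k - sMean x k) * (x i l - sMean x l)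

/-- The bootstrap distribution `Q_{n,ℱ_n}`: the conditional distribution, given the
sample x, of `√n V̂_n^{−1/2}(X̄* − X̄)` where `X̄*` is the mean of n i.i.d. draws from
the empirical measure of x. -/
def bootQ {d n : ℕ} (x : Fin n → Ed d) : Measure (Ed d) :=
  (Measure.pi fun _ : Fin n => empMeas x).map
    fun y => Real.sqrt n • mulVecE (matInvSqrt (Vhat x)) (sMean y - sMean x)

/-- `χ*_ν`, the ν-th cumulant of the conditional distribution of a bootstrap draw
given the sample, i.e. of the empirical measure. -/
def bootChi {d n : ℕ} (x : Fin n → Ed d) (ν : Fin d → ℕ) : ℂ := cumulant (empMeas x) ν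

/-- `Q̃_{n,ℱ_n}`, the Edgeworth signed measure built from the bootstrap cumulants. -/
def bootQtilde {d n : ℕ} (s : ℕ) (x : Fin n → Ed d) (A : Set (Ed d)) : ℝ :=
  edgeworthSM (bootChi x) n s A

/-- Event `ℰ_{n,0}(ρ̄) = {(1/n) Σ ‖X_i‖^s ≤ ρ̄}`. -/
def Ev0 {d : ℕ} (n s : ℕ) (ρ : ℝ) : Set (Fin n → Ed d) :=
  {x | (n : ℝ)⁻¹ * ∑ i, ‖x i‖ ^ s ≤ ρ}

/-- Event `ℰ_{n,1}(c₁) = {smallest eigenvalue of V̂_n ≥ c₁}` (via the quadratic form). -/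
def Ev1 {d : ℕ} (n : ℕ) (c₁ : ℝ) : Set (Fin n → Ed d) :=
  {x | ∀ v : Ed d, c₁ * ‖v‖ ^ 2 ≤ (inner ℝ v (mulVecE (Vhat x) v) : ℝ)}

/-- Event `ℰ_{n,2}(c₂)`: all mixed absolute moments of the sample of order ≤ s are ≤ c₂. -/
def Ev2 {d : ℕ} (n s : ℕ) (c₂ : ℝ) : Set (Fin n → Ed d) :=
  {x | ∀ v : Fin d → ℕ, (∑ k, v k) ≤ s → (n : ℝ)⁻¹ * ∑ i, ∏ k, |x i k| ^ (v k) ≤ c₂}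

/-- `ξ(u,v;t) = inf_{q∈ℤ} (t'(u−v) − 2πq)²`. -/
def xiFn {d : ℕ} (t u v : Ed d) : ℝ := ⨅ q : ℤ, ((inner ℝ t (u - v) : ℝ) - 2 * π * (q : ℝ)) ^ 2

/-- Condition (★): `c_R ≤ sup_{‖t‖>R} (1/(2π²)) E_P[inf_q (t'(X₁−X₂) − 2πq)²]`
for X₁, X₂ i.i.d. with distribution P. -/
def condStar {d : ℕ} (P : Measure (Ed d)) (R cR : ℝ) : Prop :=
  cR ≤ ⨆ t : {t : Ed d // R < ‖t‖},
    (2 * π ^ 2)⁻¹ * ∫ p : Ed d × Ed d, xiFn t.1 p.1 p.2 ∂(P.prod P)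




lemma sin_chord {z : ℝ} (h0 : 0 ≤ z) (h1 : z ≤ π/4) :
    2 * Real.sqrt 2 / π * z ≤ Real.sin z := by
  have hπ := Real.pi_pos
  have hb : (π/4 : ℝ) ∈ Set.Icc (0:ℝ) π := ⟨by positivity, by linarith⟩
  have ha : (0:ℝ) ∈ Set.Icc (0:ℝ) π := ⟨le_rfl, hπ.le⟩
  set b : ℝ := 4*z/π with hbdef
  have hb0 : 0 ≤ b := by positivity
  have hb1 : b ≤ 1 := by rw [hbdef, div_le_one hπ]; linarith
  have key := strictConcaveOn_sin_Icc.concaveOn.2 ha hb (by linarith : (0:ℝ) ≤ 1 - b) hb0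
    (by ring)
  simp only [smul_eq_mul, Real.sin_zero, mul_zero, zero_add] at key
  have hz : b * (π/4) = z := by rw [hbdef]; field_simp
  rw [hz, Real.sin_pi_div_four] at key
  calc 2 * Real.sqrt 2 / π * z = b * (Real.sqrt 2 / 2) := by
        rw [hbdef]; field_simp; ring
    _ ≤ Real.sin z := key

lemma cos_quad {y : ℝ} (h0 : 0 ≤ y) (h1 : y ≤ π/2) :
    Real.cos y ≤ 1 - 4 * y^2 / π^2 := by
  have hπ := Real.pi_pos
  have hs : 2 * Real.sqrt 2 / π * (y/2) ≤ Real.sin (y/2) :=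
    sin_chord (by linarith) (by linarith)
  have hnn : 0 ≤ 2 * Real.sqrt 2 / π * (y/2) := by positivity
  have hsq : (2 * Real.sqrt 2 / π * (y/2))^2 ≤ Real.sin (y/2)^2 :=
    pow_le_pow_left₀ hnn hs 2
  have h2 : Real.sqrt 2 ^ 2 = 2 := Real.sq_sqrt (by norm_num)
  have hval : (2 * Real.sqrt 2 / π * (y/2))^2 = 2 * y^2 / π^2 := by
    have : (2 * Real.sqrt 2 / π * (y/2))^2 = Real.sqrt 2 ^2 * y^2 / π^2 := by ring
    rw [this, h2]
  have hcos : Real.cos y = 1 - 2 * Real.sin (y/2)^2 := by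
    have hc := Real.cos_two_mul (y/2)
    have h3 := Real.sin_sq_add_cos_sq (y/2)
    rw [show 2*(y/2) = y by ring] at hc
    nlinarith
  rw [hcos]
  rw [hval] at hsq
  have : 4 * y^2/π^2 = 2 * (2*y^2/π^2) := by ring
  linarith

lemma pair_bound (a b : ℝ) :
    ‖Complex.exp ((a:ℂ) * Complex.I) + Complex.exp ((b:ℂ) * Complex.I)‖ ≤
      2 - 2/π^2 * ⨅ q : ℤ, ((a - b) - 2*π*(q:ℝ))^2 := by
  have hπ := Real.pi_pos
  set x : ℝ := a - b with hx
  have hmul2 : Complex.exp ((((a+b)/2 : ℝ):ℂ) * Complex.I) *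
      (2 * ((Complex.exp (((x/2:ℝ):ℂ) * Complex.I) + Complex.exp (-(((x/2:ℝ):ℂ)) * Complex.I))/2))
      = Complex.exp ((((a+b)/2 : ℝ):ℂ) * Complex.I + ((x/2:ℝ):ℂ) * Complex.I)
        + Complex.exp ((((a+b)/2 : ℝ):ℂ) * Complex.I + (-((x/2:ℝ):ℂ)) * Complex.I) := by
    rw [Complex.exp_add, Complex.exp_add]; ring
  have e1 : (((a+b)/2 : ℝ):ℂ) * Complex.I + ((x/2:ℝ):ℂ) * Complex.I = (a:ℂ) * Complex.I := by
    push_cast [hx]; ring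
  have e2 : (((a+b)/2 : ℝ):ℂ) * Complex.I + (-((x/2:ℝ):ℂ)) * Complex.I = (b:ℂ) * Complex.I := by
    push_cast [hx]; ring
  have hfact : Complex.exp ((a:ℂ) * Complex.I) + Complex.exp ((b:ℂ) * Complex.I)
      = Complex.exp ((((a+b)/2 : ℝ):ℂ) * Complex.I) * (2 * Complex.cos (((x/2 : ℝ)):ℂ)) := by
    rw [Complex.cos, hmul2, e1, e2]
  have habs : ‖Complex.exp ((a:ℂ) * Complex.I) + Complex.exp ((b:ℂ) * Complex.I)‖
      = 2 * |Real.cos (x/2)| := by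
    rw [hfact, norm_mul, Complex.norm_exp_ofReal_mul_I, one_mul, norm_mul,
      ← Complex.ofReal_cos, Complex.norm_two, Complex.norm_real, Real.norm_eq_abs]
  set q0 : ℤ := round (x / (2*π)) with hq0
  set r : ℝ := x - 2*π*(q0:ℝ) with hr
  have hrabs : |r| ≤ π := by
    have h := abs_sub_round (x / (2*π))
    have hre : r = (2*π) * (x/(2*π) - (q0:ℝ)) := by rw [hr]; field_simp
    rw [hre, abs_mul, abs_of_pos (by positivity : (0:ℝ) < 2*π)]
    nlinarith [h]
  have hcosr : |Real.cos (x/2)| = Real.cos (|r|/2) := by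
    have hx2 : x/2 = r/2 + (q0:ℝ) * π := by rw [hr]; ring
    rw [hx2, Real.cos_add_int_mul_pi, abs_mul]
    have hone : |((-1:ℝ))^q0| = 1 := by
      rcases Int.even_or_odd q0 with h | h
      · rw [h.neg_one_zpow]; simp
      · rw [h.neg_one_zpow]; simp
    rw [hone, one_mul]
    have habs2 := abs_le.mp hrabs
    rw [abs_of_nonneg (Real.cos_nonneg_of_mem_Icc
      ⟨by linarith [neg_abs_le r, le_abs_self r], by linarith [le_abs_self r]⟩)]
    rw [show |r|/2 = |r/2| by rw [abs_div]; norm_num]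
    exact (Real.cos_abs (r/2)).symm
  have hcb : Real.cos (|r|/2) ≤ 1 - r^2/π^2 := by
    have h4 := cos_quad (y := |r|/2) (by positivity) (by linarith)
    have h5 : 4 * (|r|/2)^2 / π^2 = r^2/π^2 := by
      rw [show (|r|/2)^2 = |r|^2/4 by ring, sq_abs]; ring
    rw [h5] at h4; exact h4
  have hbdd : BddBelow (Set.range fun q : ℤ => (x - 2*π*(q:ℝ))^2) := by
    refine ⟨0, ?_⟩; rintro s ⟨q, rfl⟩; positivity
  have hinf : (⨅ q : ℤ, (x - 2*π*(q:ℝ))^2) ≤ r^2 := by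
    simpa [hr] using ciInf_le hbdd q0
  have hmul : 2/π^2 * (⨅ q : ℤ, (x - 2*π*(q:ℝ))^2) ≤ 2/π^2 * r^2 :=
    mul_le_mul_of_nonneg_left hinf (by positivity)
  rw [habs, hcosr]
  have hrr : 2/π^2 * r^2 = 2 * (r^2/π^2) := by ring
  linarith

/-- **Inequality from the proof of Proposition 3.1.** For the empirical measure of
`u_1,…,u_n` (n ≥ 2),
`1 − |E e^{i t'W}| ≥ (1/(π² n(n−1))) Σ_{i≠j} ξ(u_i,u_j;t)` for all t. -/
theorem one_sub_abs_empirical_charFun_ge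
    (d : ℕ) (hd : 1 ≤ d) (n : ℕ) (hn : 2 ≤ n) (u : Fin n → Ed d) (t : Ed d) :
    1 - ‖(n : ℂ)⁻¹ *
          ∑ i : Fin n, Complex.exp (((inner ℝ t (u i) : ℝ) : ℂ) * Complex.I)‖ ≥
      (π ^ 2 * n * ((n : ℝ) - 1))⁻¹ *
        ∑ p ∈ Finset.univ.filter fun p : Fin n × Fin n => p.1 ≠ p.2,
          xiFn t (u p.1) (u p.2) := by
  have hπ := Real.pi_pos
  set θ : Fin n → ℝ := fun i => (inner ℝ t (u i) : ℝ) with hθ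
  set f : Fin n → ℂ := fun i => Complex.exp (((θ i : ℝ) : ℂ) * Complex.I) with hf
  set S : ℂ := ∑ i, f i with hS
  set F : Finset (Fin n × Fin n) := Finset.univ.filter fun p : Fin n × Fin n => p.1 ≠ p.2
    with hF
  have hxi : ∀ p : Fin n × Fin n, xiFn t (u p.1) (u p.2)
      = ⨅ q : ℤ, ((θ p.1 - θ p.2) - 2*π*(q:ℝ))^2 := by
    intro p
    unfold xiFn
    congr 1; funext q
    rw [inner_sub_right]
  have hall : ∑ p ∈ (Finset.univ : Finset (Fin n × Fin n)), (f p.1 + f p.2)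
      = (n:ℂ) * S + (n:ℂ) * S := by
    rw [← Finset.univ_product_univ, Finset.sum_product]
    have hrow : ∀ i : Fin n, ∑ j : Fin n, (f i + f j) = (n:ℂ) * f i + S := by
      intro i
      rw [Finset.sum_add_distrib, Finset.sum_const, Finset.card_univ, Fintype.card_fin,
        nsmul_eq_mul, ← hS]
    rw [Finset.sum_congr rfl fun i _ => hrow i, Finset.sum_add_distrib, ← Finset.mul_sum,
      ← hS, Finset.sum_const, Finset.card_univ, Fintype.card_fin, nsmul_eq_mul]
  have hdiag : ∑ p ∈ Finset.univ.filter (fun p : Fin n × Fin n => p.1 = p.2), (f p.1 + f p.2)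
      = 2 * S := by
    rw [Finset.sum_filter, ← Finset.univ_product_univ, Finset.sum_product]
    simp only [Finset.sum_ite_eq, Finset.mem_univ, if_true]
    rw [two_mul, hS, ← Finset.sum_add_distrib]
  have hFsum : ∑ p ∈ F, (f p.1 + f p.2) = (2*(n:ℂ) - 2) * S := by
    have h := Finset.sum_filter_add_sum_filter_not (Finset.univ : Finset (Fin n × Fin n))
      (fun p => p.1 = p.2) (fun p => f p.1 + f p.2)
    have hFeq : Finset.univ.filter (fun p : Fin n × Fin n => ¬ p.1 = p.2) = F := rfl
    rw [hFeq, hdiag, hall] at h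
    have h2 : ∑ p ∈ F, (f p.1 + f p.2) = (n:ℂ) * S + (n:ℂ) * S - 2 * S := by
      linear_combination h
    rw [h2]; ring
  have hcard : (F.card : ℝ) = (n:ℝ)*(n:ℝ) - (n:ℝ) := by
    have h1 : F = (Finset.univ : Finset (Fin n)).offDiag := by
      rw [hF]; ext p; simp
    rw [h1, Finset.offDiag_card, Finset.card_univ, Fintype.card_fin]
    have hle : n ≤ n * n := Nat.le_mul_of_pos_left n (by omega)
    push_cast [Nat.cast_sub hle]
    ring
  have hmain : (2*(n:ℝ) - 2) * ‖S‖
      ≤ 2 * ((n:ℝ)*(n:ℝ) - (n:ℝ)) - 2/π^2 * ∑ p ∈ F, xiFn t (u p.1) (u p.2) := by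
    have h1 : (2*(n:ℝ) - 2) * ‖S‖ = ‖(2*(n:ℂ) - 2) * S‖ := by
      rw [norm_mul]
      congr 1
      rw [show (2*(n:ℂ) - 2) = (((2*(n:ℝ) - 2 : ℝ)):ℂ) by push_cast; ring,
        Complex.norm_real, Real.norm_eq_abs, abs_of_nonneg]
      have : (2:ℝ) ≤ (n:ℝ) := by exact_mod_cast hn
      linarith
    rw [h1, ← hFsum]
    calc ‖∑ p ∈ F, (f p.1 + f p.2)‖
        ≤ ∑ p ∈ F, ‖f p.1 + f p.2‖ := norm_sum_le _ _
      _ ≤ ∑ p ∈ F, (2 - 2/π^2 * xiFn t (u p.1) (u p.2)) := by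
          refine Finset.sum_le_sum fun p _ => ?_
          rw [hxi p]
          exact pair_bound (θ p.1) (θ p.2)
      _ = 2 * ((n:ℝ)*(n:ℝ) - (n:ℝ)) - 2/π^2 * ∑ p ∈ F, xiFn t (u p.1) (u p.2) := by
          rw [Finset.sum_sub_distrib, Finset.sum_const, ← Finset.mul_sum]
          rw [nsmul_eq_mul, hcard]; ring
  have habsS : ‖(n:ℂ)⁻¹ * S‖ = ((n:ℝ))⁻¹ * ‖S‖ := by
    rw [norm_mul, norm_inv, Complex.norm_natCast]
  rw [ge_iff_le]
  set Ξ : ℝ := ∑ p ∈ F, xiFn t (u p.1) (u p.2) with hΞ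
  have hN : (2:ℝ) ≤ (n:ℝ) := by exact_mod_cast hn
  have hN0 : (0:ℝ) < (n:ℝ) := by linarith
  have hπ2 : (0:ℝ) < π^2 := by positivity
  have hpos : (0:ℝ) < π^2 * (n:ℝ) * ((n:ℝ) - 1) :=
    mul_pos (mul_pos hπ2 hN0) (by linarith)
  rw [show ((n:ℂ)⁻¹ * ∑ i : Fin n, Complex.exp (((inner ℝ t (u i) : ℝ) : ℂ) * Complex.I))
      = (n:ℂ)⁻¹ * S from rfl, habsS]
  rw [inv_mul_le_iff₀ hpos]
  set A : ℝ := ‖S‖ with hA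
  have e1 : (2/π^2) * Ξ ≤ 2*((n:ℝ)*(n:ℝ)-(n:ℝ)) - (2*(n:ℝ)-2)*A := by linarith [hmain]
  have e2 : Ξ = (π^2/2) * ((2/π^2) * Ξ) := by field_simp
  have e3 : Ξ ≤ (π^2/2) * (2*((n:ℝ)*(n:ℝ)-(n:ℝ)) - (2*(n:ℝ)-2)*A) := by
    rw [e2]; exact mul_le_mul_of_nonneg_left e1 (by positivity)
  have e4 : π^2*(n:ℝ)*((n:ℝ)-1) * (1 - ((n:ℝ))⁻¹*A)
      = (π^2/2) * (2*((n:ℝ)*(n:ℝ)-(n:ℝ)) - (2*(n:ℝ)-2)*A) := by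
    field_simp
  rw [e4]; exact e3
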